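/- For a chord of a circle and a point strictly inside the circle on the same side of the chord as a given arc, the angle subtended by the chord at the interior point is strictly greater than the angle subtended at any point on that arc. -/

import Mathlib

open Real EuclideanGeometry

theorem angle_lt_of_inside_circle
    (c x y v x₀ : EuclideanSpace ℝ (Fin 2)) (R : ℝ) (hR : 0 < R)
    (hx : dist x c = R) (hy : dist y c = R) (hv : dist v c = R)
    (hxy : x ≠ y) (hvx : v ≠ x) (hvy : v ≠ y)
    (hin : dist x₀ c < R)
    (hside : (affineSpan ℝ {x, y}).SSameSide v x₀) :
    ∠ x v y < ∠ x x₀ y := by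
  haveI : Fact (Module.finrank ℝ (EuclideanSpace ℝ (Fin 2)) = 2) :=
    ⟨finrank_euclideanSpace_fin⟩
  haveI : Module.Oriented ℝ (EuclideanSpace ℝ (Fin 2)) (Fin 2) :=
    ⟨Module.Basis.orientation (EuclideanSpace.basisFun (Fin 2) ℝ).toBasis⟩
  set S : EuclideanGeometry.Sphere (EuclideanSpace ℝ (Fin 2)) := ⟨c, R⟩ with hSdef
  have hxS : x ∈ S := hx
  have hyS : y ∈ S := hy
  have hvS : v ∈ S := hv
  have hinS : dist x₀ S.center < S.radius := hin
  set w := S.secondInter x (x₀ -ᵥ x) with hwdef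
  have hsb : Sbtw ℝ x x₀ w := Sphere.sbtw_secondInter hxS hinS
  have hwS : w ∈ S := (Sphere.secondInter_mem _).2 hxS
  have hxmem : x ∈ affineSpan ℝ ({x, y} : Set (EuclideanSpace ℝ (Fin 2))) :=
    left_mem_affineSpan_pair ℝ x y
  have hymem : y ∈ affineSpan ℝ ({x, y} : Set (EuclideanSpace ℝ (Fin 2))) :=
    right_mem_affineSpan_pair ℝ x y
  have hx0not : x₀ ∉ affineSpan ℝ ({x, y} : Set (EuclideanSpace ℝ (Fin 2))) :=
    hside.right_notMem
  have hvnot : v ∉ affineSpan ℝ ({x, y} : Set (EuclideanSpace ℝ (Fin 2))) :=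
    hside.left_notMem
  -- w is not on the line xy
  have hwnot : w ∉ affineSpan ℝ ({x, y} : Set (EuclideanSpace ℝ (Fin 2))) := by
    intro hwmem
    apply hx0not
    have hx0line : x₀ ∈ line[ℝ, x, w] := hsb.wbtw.mem_affineSpan
    have hle : line[ℝ, x, w] ≤ affineSpan ℝ ({x, y} : Set (EuclideanSpace ℝ (Fin 2))) := by
      rw [affineSpan_le]
      rintro p (rfl | rfl)
      · exact hxmem
      · exact hwmem
    exact hle hx0line
  -- v and w are on the same side of line xy
  have hssvw : (affineSpan ℝ ({x, y} : Set (EuclideanSpace ℝ (Fin 2)))).SSameSide v w :=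
    hside.trans ⟨hsb.wbtw.wSameSide₂₃ hxmem, hx0not, hwnot⟩
  have hsign : (∡ x w y).sign = (∡ x v y).sign :=
    AffineSubspace.SSameSide.oangle_sign_eq hxmem hymem hssvw
  have hwx : w ≠ x := hsb.left_ne_right.symm
  have hwy : w ≠ y := by
    rintro rfl
    apply hx0not
    exact (hsb.wbtw.collinear.mem_affineSpan_of_mem_of_ne
      (by simp) (by simp) (by simp) hxy)
  -- inscribed angle: oriented angles agree mod π
  have h2 : (2 : ℤ) • ∡ x v y = (2 : ℤ) • ∡ x w y :=
    Sphere.two_zsmul_oangle_eq hxS hvS hwS hyS hvx hvy hwx hwy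
  have hvsign : (∡ x v y).sign ≠ 0 := fun h =>
    hvnot ((EuclideanGeometry.oangle_sign_eq_zero_iff_collinear.1 h).mem_affineSpan_of_mem_of_ne
      (by simp) (by simp) (by simp) hxy)
  have hoeq : ∡ x v y = ∡ x w y := by
    rcases Real.Angle.two_zsmul_eq_iff.1 h2 with h | h
    · exact h
    · exfalso
      have hves : (∡ x v y).sign = -(∡ x v y).sign := by
        nth_rewrite 2 [← hsign]
        rw [← Real.Angle.sign_add_pi, ← h]
      exact hvsign (by
        cases hsgn : (∡ x v y).sign <;> rw [hsgn] at hves <;>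
          first | rfl | (exact absurd hves (by decide)))
  have hxv : x ≠ v := hvx.symm
  have hyv : y ≠ v := hvy.symm
  have hxw : x ≠ w := hwx.symm
  have hyw : y ≠ w := hwy.symm
  have hangeq : ∠ x v y = ∠ x w y := by
    rw [EuclideanGeometry.angle_eq_abs_oangle_toReal hxv hyv,
      EuclideanGeometry.angle_eq_abs_oangle_toReal hxw hyw, hoeq]
  -- now the exterior-angle argument
  have hpiwx : ∠ w x₀ x = π := hsb.symm.angle₁₂₃_eq_pi
  have hray : ∠ y w x₀ = ∠ y w x := angle_eq_angle_of_angle_eq_pi y hpiwx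
  have hpix : ∠ x x₀ w = π := hsb.angle₁₂₃_eq_pi
  have hsumpi : ∠ y x₀ x + ∠ y x₀ w = π := angle_add_angle_eq_pi_of_angle_eq_pi y hpix
  have hncol : ¬ Collinear ℝ ({x₀, w, y} : Set (EuclideanSpace ℝ (Fin 2))) := by
    intro hc
    apply hx0not
    have hy_line : y ∈ line[ℝ, x, w] := by
      have hxline : x ∈ line[ℝ, x₀, w] :=
        hsb.wbtw.collinear.mem_affineSpan_of_mem_of_ne (by simp) (by simp) (by simp) hsb.ne_right
      have hyline : y ∈ line[ℝ, x₀, w] :=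
        hc.mem_affineSpan_of_mem_of_ne (by simp) (by simp) (by simp) hsb.ne_right
      have hcall : Collinear ℝ ({y, x, x₀, w} : Set (EuclideanSpace ℝ (Fin 2))) :=
        collinear_insert_insert_of_mem_affineSpan_pair hyline hxline
      exact hcall.mem_affineSpan_of_mem_of_ne (by simp) (by simp) (by simp) hwx.symm
    have hcall2 : Collinear ℝ ({x₀, y, x, w} : Set (EuclideanSpace ℝ (Fin 2))) :=
      collinear_insert_insert_of_mem_affineSpan_pair hsb.wbtw.mem_affineSpan hy_line
    exact (hcall2.subset (by intro p hp; simp at hp; rcases hp with rfl|rfl|rfl; all_goals simp)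
      : Collinear ℝ ({x₀, y, x} : Set (EuclideanSpace ℝ (Fin 2)))).mem_affineSpan_of_mem_of_ne
      (by simp) (by simp) (by simp) hxy
  -- triangle sum in triangle x₀ w y
  have htri : ∠ x₀ w y + ∠ w y x₀ + ∠ y x₀ w = π :=
    angle_add_angle_add_angle_eq_pi y hsb.ne_right.symm
  have hposwy : 0 < ∠ w y x₀ := by
    apply EuclideanGeometry.angle_pos_of_not_collinear
    intro hc
    exact hncol (hc.subset (by intro p hp; simp at hp; rcases hp with rfl|rfl|rfl <;> simp))
  have hkey : ∠ x w y < ∠ x x₀ y := by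
    have h1 : ∠ x x₀ y = ∠ y x₀ x := EuclideanGeometry.angle_comm x x₀ y
    have h2' : ∠ x w y = ∠ y w x := EuclideanGeometry.angle_comm x w y
    have h3 : ∠ y w x₀ = ∠ x₀ w y := EuclideanGeometry.angle_comm y w x₀
    linarith [hsumpi, htri, hray, hposwy]
  linarith [hangeq]
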